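/- Let (fₙ) be a sequence of convex functions on [a,b], each differentiable on (a,b), converging uniformly to f. If f is differentiable at a point x₀ ∈ (a,b), then fₙ'(x₀) → f'(x₀). -/

import Mathlib

set_option maxHeartbeats 1000000

open Filter Set Topology

theorem stmt_15 (a b : ℝ) (hab : a < b) (f : ℕ → ℝ → ℝ) (g : ℝ → ℝ)
    (hconv : ∀ n, ConvexOn ℝ (Set.Icc a b) (f n))
    (hdiff : ∀ n, ∀ x ∈ Set.Ioo a b, DifferentiableAt ℝ (f n) x)
    (hunif : TendstoUniformlyOn f g Filter.atTop (Set.Icc a b))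
    (x₀ : ℝ) (hx₀ : x₀ ∈ Set.Ioo a b) (hg : DifferentiableAt ℝ g x₀) :
    Filter.Tendsto (fun n => deriv (f n) x₀) Filter.atTop (nhds (deriv g x₀)) := by
  rw [Metric.tendsto_atTop]
  intro ε hε
  have hslope : Tendsto (slope g x₀) (𝓝[≠] x₀) (𝓝 (deriv g x₀)) :=
    hasDerivAt_iff_tendsto_slope.mp hg.hasDerivAt
  have hev : ∀ᶠ y in 𝓝[≠] x₀, |slope g x₀ y - deriv g x₀| < ε / 4 ∧ y ∈ Ioo a b := by
    have h1 : ∀ᶠ y in 𝓝[≠] x₀, |slope g x₀ y - deriv g x₀| < ε / 4 := by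
      have := hslope (Metric.ball_mem_nhds (deriv g x₀) (by positivity : (0:ℝ) < ε / 4))
      filter_upwards [this] with y hy
      simpa [Real.dist_eq] using hy
    have h2 : ∀ᶠ y in 𝓝[≠] x₀, y ∈ Ioo a b :=
      eventually_nhdsWithin_of_eventually_nhds
        ((isOpen_Ioo.eventually_mem hx₀))
    exact h1.and h2
  -- pick points on both sides
  obtain ⟨y₁, hy₁, hy₁gt⟩ : ∃ y, (|slope g x₀ y - deriv g x₀| < ε / 4 ∧ y ∈ Ioo a b) ∧ x₀ < y := by
    have : ∀ᶠ y in 𝓝[>] x₀, (|slope g x₀ y - deriv g x₀| < ε / 4 ∧ y ∈ Ioo a b) ∧ x₀ < y := by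
      refine (hev.filter_mono (nhdsWithin_mono _ ?_)).and self_mem_nhdsWithin
      intro y hy; exact ne_of_gt hy
    exact this.exists
  obtain ⟨y₂, hy₂, hy₂lt⟩ : ∃ y, (|slope g x₀ y - deriv g x₀| < ε / 4 ∧ y ∈ Ioo a b) ∧ y < x₀ := by
    have : ∀ᶠ y in 𝓝[<] x₀, (|slope g x₀ y - deriv g x₀| < ε / 4 ∧ y ∈ Ioo a b) ∧ y < x₀ := by
      refine (hev.filter_mono (nhdsWithin_mono _ ?_)).and self_mem_nhdsWithin
      intro y hy; exact ne_of_lt hy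
    exact this.exists
  set h₁ : ℝ := y₁ - x₀ with hh₁
  set h₂ : ℝ := x₀ - y₂ with hh₂
  have hh₁pos : 0 < h₁ := by simp [hh₁]; linarith
  have hh₂pos : 0 < h₂ := by simp [hh₂]; linarith
  set δ : ℝ := ε / 4 * min h₁ h₂ with hδ
  have hδpos : 0 < δ := by positivity
  obtain ⟨N, hN⟩ := (Metric.tendstoUniformlyOn_iff.mp hunif δ hδpos).exists_forall_of_atTop
  refine ⟨N, fun n hn => ?_⟩
  have hmem₀ : x₀ ∈ Icc a b := Ioo_subset_Icc_self hx₀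
  have hmem₁ : y₁ ∈ Icc a b := Ioo_subset_Icc_self hy₁.2
  have hmem₂ : y₂ ∈ Icc a b := Ioo_subset_Icc_self hy₂.2
  have hd : DifferentiableAt ℝ (f n) x₀ := hdiff n x₀ hx₀
  have hub : deriv (f n) x₀ ≤ slope (f n) x₀ y₁ :=
    (hconv n).deriv_le_slope hmem₀ hmem₁ hy₁gt hd
  have hlb : slope (f n) y₂ x₀ ≤ deriv (f n) x₀ :=
    (hconv n).slope_le_deriv hmem₂ hmem₀ hy₂lt hd
  have e0 : |g x₀ - f n x₀| < δ := by
    have := hN n hn x₀ hmem₀; rwa [Real.dist_eq] at this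
  have e1 : |g y₁ - f n y₁| < δ := by
    have := hN n hn y₁ hmem₁; rwa [Real.dist_eq] at this
  have e2 : |g y₂ - f n y₂| < δ := by
    have := hN n hn y₂ hmem₂; rwa [Real.dist_eq] at this
  rw [Real.dist_eq, abs_sub_lt_iff]
  have hs1 : slope g x₀ y₁ = (g y₁ - g x₀) / h₁ := by
    rw [slope_def_field]
  have hs2 : slope g x₀ y₂ = (g x₀ - g y₂) / h₂ := by
    rw [slope_def_field, div_eq_div_iff (by linarith : y₂ - x₀ < 0).ne hh₂pos.ne']; ring
  have hf1 : slope (f n) x₀ y₁ = (f n y₁ - f n x₀) / h₁ := by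
    rw [slope_def_field]
  have hf2 : slope (f n) y₂ x₀ = (f n x₀ - f n y₂) / h₂ := by
    rw [slope_def_field, div_eq_div_iff (by linarith : (0:ℝ) < x₀ - y₂).ne' hh₂pos.ne']
  have habs0 := abs_lt.mp e0
  have habs1 := abs_lt.mp e1
  have habs2 := abs_lt.mp e2
  have hδ₁ : δ ≤ ε / 4 * h₁ := by
    apply mul_le_mul_of_nonneg_left (min_le_left _ _) (by positivity)
  have hδ₂ : δ ≤ ε / 4 * h₂ := by
    apply mul_le_mul_of_nonneg_left (min_le_right _ _) (by positivity)
  have hg1 := abs_lt.mp hy₁.1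
  have hg2 := abs_lt.mp hy₂.1
  constructor
  · -- deriv (f n) x₀ - deriv g x₀ < ε
    have key : slope (f n) x₀ y₁ ≤ slope g x₀ y₁ + 2 * δ / h₁ := by
      rw [hs1, hf1, ← add_div, div_le_div_iff₀ hh₁pos hh₁pos]
      nlinarith [habs0.1, habs0.2, habs1.1, habs1.2, hh₁pos]
    have h2δ : 2 * δ / h₁ ≤ ε / 2 := by
      rw [div_le_iff₀ hh₁pos]; nlinarith
    calc deriv (f n) x₀ - deriv g x₀ ≤ slope (f n) x₀ y₁ - deriv g x₀ := by linarith
      _ ≤ slope g x₀ y₁ + 2 * δ / h₁ - deriv g x₀ := by linarith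
      _ < ε := by linarith [hg1.2]
  · -- deriv g x₀ - deriv (f n) x₀ < ε
    have key : slope g x₀ y₂ - 2 * δ / h₂ ≤ slope (f n) y₂ x₀ := by
      rw [hs2, hf2, div_sub_div_same, div_le_div_iff₀ hh₂pos hh₂pos]
      nlinarith [habs0.1, habs0.2, habs2.1, habs2.2, hh₂pos]
    have h2δ : 2 * δ / h₂ ≤ ε / 2 := by
      rw [div_le_iff₀ hh₂pos]; nlinarith
    calc deriv g x₀ - deriv (f n) x₀ ≤ deriv g x₀ - slope (f n) y₂ x₀ := by linarith
      _ ≤ deriv g x₀ - (slope g x₀ y₂ - 2 * δ / h₂) := by linarith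
      _ < ε := by linarith [hg2.1]
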